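/- Let P, Q be finite posets and ξ : P → Q an order homomorphism. Define on G(ξ) the relation a ≼_0 b iff there exist a' ∈ a, b' ∈ b with a' ≤_P b', and let ≼ be its transitive hull. Then ≼ is a partial order on G(ξ), the canonical map π_ξ : P → G(ξ), x ↦ G_ξ(x), is an order homomorphism, and the induced map ι_ξ : G(ξ) → Q, G_ξ(x) ↦ ξ(x), is a strict order homomorphism satisfying ξ = ι_ξ ∘ π_ξ. -/

import Mathlib

/-- Zigzag connectivity within a subset `A`. -/
def ZigConn {α : Type*} [PartialOrder α] (A : Set α) (x y : α) : Prop :=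
  Relation.ReflTransGen (fun a b => a ∈ A ∧ b ∈ A ∧ (a < b ∨ b < a)) x y

/-- The zigzag-connectivity component of `x` inside the pre-image `ξ⁻¹(ξ(x))`. -/
def Gxi {P Q : Type*} [PartialOrder P] (ξ : P → Q) (x : P) : Set P :=
  {y | ZigConn (ξ ⁻¹' {ξ x}) x y}

/-- The partition `G(ξ)` of `P` into the components `G_ξ(x)`, as a type. -/
def GType {P Q : Type*} [PartialOrder P] (ξ : P → Q) : Type _ :=
  {s : Set P // ∃ x : P, s = Gxi ξ x}

/-- The relation `≼₀` on `G(ξ)`. -/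
def Prec0 {P Q : Type*} [PartialOrder P] (ξ : P → Q) (a b : GType ξ) : Prop :=
  ∃ a' ∈ a.1, ∃ b' ∈ b.1, a' ≤ b'

/-- The transitive hull of a relation. -/
def TransHull {X : Type*} (R : X → X → Prop) (x y : X) : Prop :=
  ∀ S : X → X → Prop, Transitive S → (∀ a b, R a b → S a b) → S x y

/-- The relation `≼` on `G(ξ)`: the transitive hull of `≼₀`. -/
def Prec {P Q : Type*} [PartialOrder P] (ξ : P → Q) : GType ξ → GType ξ → Prop :=
  TransHull (Prec0 ξ)

section Aux
variable {P Q : Type*} [PartialOrder P] (ξ : P → Q)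

lemma mem_Gxi_self (x : P) : x ∈ Gxi ξ x := Relation.ReflTransGen.refl

lemma apply_eq_of_mem_Gxi {x y : P} (h : y ∈ Gxi ξ x) : ξ y = ξ x := by
  induction h with
  | refl => rfl
  | tail _ h2 ih => exact h2.2.1

lemma Gxi_eq_of_mem {x y : P} (h : y ∈ Gxi ξ x) : Gxi ξ y = Gxi ξ x := by
  have hfib : (ξ ⁻¹' {ξ y}) = (ξ ⁻¹' {ξ x}) := by
    rw [apply_eq_of_mem_Gxi ξ h]
  have hsymm : Symmetric (fun a b => a ∈ ξ ⁻¹' {ξ x} ∧ b ∈ ξ ⁻¹' {ξ x} ∧ (a < b ∨ b < a)) :=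
    fun a b ⟨ha, hb, hab⟩ => ⟨hb, ha, hab.symm⟩
  have h' : ZigConn (ξ ⁻¹' {ξ x}) y x := by
    haveI : Std.Symm (fun a b => a ∈ ξ ⁻¹' {ξ x} ∧ b ∈ ξ ⁻¹' {ξ x} ∧ (a < b ∨ b < a)) :=
      ⟨fun a b hab => hsymm hab⟩
    exact Relation.ReflTransGen.symmetric.symm _ _ h
  ext z
  constructor
  · intro hz
    exact Relation.ReflTransGen.trans (h : ZigConn _ x y) (by rw [← hfib]; exact hz)
  · intro hz
    rw [Gxi, Set.mem_setOf_eq, hfib]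
    exact Relation.ReflTransGen.trans h' hz

lemma transGen_of_transHull {X : Type*} {R : X → X → Prop} {x y : X}
    (h : TransHull R x y) : Relation.TransGen R x y :=
  h _ (fun _ _ _ => Relation.TransGen.trans) (fun _ _ => Relation.TransGen.single)

lemma transHull_of_transGen {X : Type*} {R : X → X → Prop} {x y : X}
    (h : Relation.TransGen R x y) : TransHull R x y := by
  induction h with
  | single h1 => exact fun S _ hR => hR _ _ h1
  | tail _ h2 ih => exact fun S hS hR => hS (ih S hS hR) (hR _ _ h2)

end Aux

theorem stmt_9 {P Q : Type} [Fintype P] [PartialOrder P] [Fintype Q] [PartialOrder Q]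
    (ξ : P → Q) (hmono : Monotone ξ) :
    -- `≼` is a partial order on `G(ξ)`
    (∀ a : GType ξ, Prec ξ a a) ∧
    (∀ a b : GType ξ, Prec ξ a b → Prec ξ b a → a = b) ∧
    (∀ a b c : GType ξ, Prec ξ a b → Prec ξ b c → Prec ξ a c) ∧
    -- `π_ξ` is an order homomorphism
    (∀ x y : P, x ≤ y →
      Prec ξ (⟨Gxi ξ x, x, rfl⟩ : GType ξ) (⟨Gxi ξ y, y, rfl⟩ : GType ξ)) ∧
    -- `ι_ξ` is a strict order homomorphism with `ξ = ι_ξ ∘ π_ξ`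
    (∃ ι : GType ξ → Q,
      (∀ x : P, ι ⟨Gxi ξ x, x, rfl⟩ = ξ x) ∧
      (∀ a b : GType ξ, Prec ξ a b → ι a ≤ ι b) ∧
      (∀ a b : GType ξ, Prec ξ a b → a ≠ b → ι a < ι b)) := by

  classical
  set ι : GType ξ → Q := fun a => ξ a.2.choose with hι
  have ispec : ∀ (a : GType ξ) (x : P), a.1 = Gxi ξ x → ι a = ξ x := by
    intro a x hx
    have hc : a.1 = Gxi ξ a.2.choose := a.2.choose_spec
    have hmem : x ∈ Gxi ξ a.2.choose := by
      rw [← hc, hx]; exact mem_Gxi_self ξ x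
    exact (apply_eq_of_mem_Gxi ξ hmem).symm
  have imem : ∀ (a : GType ξ) (x : P), x ∈ a.1 → ξ x = ι a := by
    intro a x hx
    have hc : a.1 = Gxi ξ a.2.choose := a.2.choose_spec
    rw [hc] at hx
    exact apply_eq_of_mem_Gxi ξ hx
  have comp_eq : ∀ (a : GType ξ) (x : P), x ∈ a.1 → a.1 = Gxi ξ x := by
    intro a x hx
    have hc : a.1 = Gxi ξ a.2.choose := a.2.choose_spec
    rw [hc] at hx ⊢
    exact (Gxi_eq_of_mem ξ hx).symm
  have h0le : ∀ a b : GType ξ, Prec0 ξ a b → ι a ≤ ι b := by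
    rintro a b ⟨a', ha', b', hb', hab⟩
    rw [← imem a a' ha', ← imem b b' hb']
    exact hmono hab
  have h0eq : ∀ a b : GType ξ, Prec0 ξ a b → ι a = ι b → a = b := by
    rintro a b ⟨a', ha', b', hb', hab⟩ hiq
    have hξ : ξ a' = ξ b' := by
      rw [imem a a' ha', imem b b' hb', hiq]
    have hmem : b' ∈ Gxi ξ a' := by
      rcases eq_or_lt_of_le hab with h | h
      · rw [h]; exact mem_Gxi_self ξ b'
      · exact Relation.ReflTransGen.single ⟨rfl, hξ.symm, Or.inl h⟩
    have ha : a.1 = Gxi ξ a' := comp_eq a a' ha'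
    have hb : b.1 = Gxi ξ b' := comp_eq b b' hb'
    apply Subtype.ext
    rw [ha, hb, Gxi_eq_of_mem ξ hmem]
  have key : ∀ a b : GType ξ, Relation.TransGen (Prec0 ξ) a b →
      ι a ≤ ι b ∧ (ι a = ι b → a = b) := by
    intro a b h
    induction h with
    | single h1 => exact ⟨h0le _ _ h1, h0eq _ _ h1⟩
    | @tail m n h1 h2 ih =>
      refine ⟨le_trans ih.1 (h0le _ _ h2), fun heq => ?_⟩
      have hmn : ι m = ι n := le_antisymm (h0le _ _ h2) (heq ▸ ih.1)
      have ham : ι a = ι m := by rw [hmn, heq]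
      rw [ih.2 ham, h0eq _ _ h2 hmn]
  refine ⟨?_, ?_, ?_, ?_, ι, ?_, ?_, ?_⟩
  · intro a
    apply transHull_of_transGen
    apply Relation.TransGen.single
    obtain ⟨x, hx⟩ := a.2
    exact ⟨x, by rw [hx]; exact mem_Gxi_self ξ x,
           x, by rw [hx]; exact mem_Gxi_self ξ x, le_refl x⟩
  · intro a b hab hba
    have h1 := key a b (transGen_of_transHull hab)
    have h2 := key b a (transGen_of_transHull hba)
    exact h1.2 (le_antisymm h1.1 h2.1)
  · intro a b c hab hbc
    exact transHull_of_transGen ((transGen_of_transHull hab).trans (transGen_of_transHull hbc))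
  · intro x y hxy
    exact transHull_of_transGen (Relation.TransGen.single
      ⟨x, mem_Gxi_self ξ x, y, mem_Gxi_self ξ y, hxy⟩)
  · intro x
    exact ispec _ x rfl
  · intro a b h
    exact (key a b (transGen_of_transHull h)).1
  · intro a b h hne
    have hk := key a b (transGen_of_transHull h)
    exact lt_of_le_of_ne hk.1 (fun heq => hne (hk.2 heq))
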